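/- (Lemma 3.4, comparison of fixed points.) Let T ⊂ ℝ^d be convex and symmetric, let N ≥ 1, Q > 0 and c₀ > 0. Define r_k(Q) := inf{r > 0 : ℓ*(2T ∩ rB₂^d) ≤ Q r √k} for integers k, let k* be the smallest integer exceeding (ℓ*(T)/(Q·diam(T)))², let A := {k ≥ k* : r_k(Q) ≤ c₀ Q √(k/N)} and, assuming A is nonempty, set k₁ := min A. Define s_N*(η) := inf{s > 0 : ℓ*(2T ∩ sB₂^d) ≤ η s² √N}. Then: (a) if η ≤ 2/c₀, then r_{k₁}(Q)/2 ≤ s_N*(η); and (b) if η ≥ 1/c₀ and k₁ > k*, then r_{k₁−1}(Q) ≥ s_N*(η). -/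

import Mathlib

open MeasureTheory ProbabilityTheory Real Set
open scoped RealInnerProductSpace ENNReal NNReal Pointwise

noncomputable section
/-- The standard gaussian measure on `ℝ^d`. -/
def stdGaussian (d : ℕ) : Measure (EuclideanSpace ℝ (Fin d)) :=
  (Measure.pi fun _ : Fin d => gaussianReal 0 1).map
    (MeasurableEquiv.toLp 2 (Fin d → ℝ))

/-- The gaussian mean width `ℓ*(T) = E sup_{t ∈ T} ⟨g,t⟩` of `T ⊆ ℝ^d`. -/
def gaussWidth {d : ℕ} (T : Set (EuclideanSpace ℝ (Fin d))) : ℝ :=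
  ∫ g, (⨆ t : T, (inner ℝ g t.1 : ℝ)) ∂(stdGaussian d)

/-- The fixed point `r_k(Q) = inf{r > 0 : ℓ*(2T ∩ rB₂) ≤ Q r √k}`. -/
def rK {d : ℕ} (T : Set (EuclideanSpace ℝ (Fin d))) (Q : ℝ) (k : ℕ) : ℝ :=
  sInf {r : ℝ | 0 < r ∧
    gaussWidth (((2 : ℝ) • T) ∩ Metric.closedBall 0 r) ≤ Q * r * Real.sqrt (k : ℝ)}

/-- `k*`, the smallest integer exceeding `(ℓ*(T)/(Q diam T))²`. -/
def kStar {d : ℕ} (T : Set (EuclideanSpace ℝ (Fin d))) (Q : ℝ) : ℕ :=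
  Nat.floor ((gaussWidth T / (Q * Metric.diam T)) ^ 2) + 1

/-- The fixed point `s_N*(η) = inf{s > 0 : ℓ*(2T ∩ sB₂) ≤ η s² √N}`. -/
def sStar {d : ℕ} (T : Set (EuclideanSpace ℝ (Fin d))) (N : ℕ) (η : ℝ) : ℝ :=
  sInf {s : ℝ | 0 < s ∧
    gaussWidth (((2 : ℝ) • T) ∩ Metric.closedBall 0 s) ≤ η * s ^ 2 * Real.sqrt (N : ℝ)}

/-! ### Auxiliary lemmas -/

lemma pi_map_eval {ι : Type*} [Fintype ι] [DecidableEq ι] (μ : ι → Measure ℝ)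
    [∀ i, IsProbabilityMeasure (μ i)] (i : ι) :
    (Measure.pi μ).map (Function.eval i) = μ i := by
  ext s hs
  rw [Measure.map_apply (measurable_pi_apply i) hs, Set.eval_preimage, Measure.pi_pi]
  rw [Finset.prod_eq_single i (fun j _ hj => by simp [Function.update_of_ne hj])
    (fun h => absurd (Finset.mem_univ i) h)]
  simp

lemma integrable_abs_gaussian : Integrable (fun x : ℝ => |x|) (gaussianReal 0 1) := by
  rw [gaussianReal_of_var_ne_zero 0 one_ne_zero,
    integrable_withDensity_iff (measurable_gaussianPDF 0 1)
      (ae_of_all _ fun x => ENNReal.ofReal_lt_top)]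
  have h : (fun x : ℝ => |x| * ((gaussianPDF 0 1 x).toReal))
      = fun x => (√(2 * π))⁻¹ * |x * rexp (-(2⁻¹) * x ^ 2)| := by
    funext x
    rw [gaussianPDF, ENNReal.toReal_ofReal (gaussianPDFReal_nonneg _ _ _), gaussianPDFReal]
    rw [abs_mul, abs_of_pos (Real.exp_pos _)]
    push_cast
    ring_nf
  rw [h]
  exact ((integrable_mul_exp_neg_mul_sq (by norm_num : (0:ℝ) < 2⁻¹)).abs).const_mul _

lemma integrable_abs_eval {d : ℕ} (i : Fin d) :
    Integrable (fun x : Fin d → ℝ => |x i|)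
      (Measure.pi fun _ : Fin d => gaussianReal 0 1) := by
  have h := integrable_abs_gaussian
  rw [← pi_map_eval (fun _ : Fin d => gaussianReal 0 1) i] at h
  exact (integrable_map_measure continuous_abs.aestronglyMeasurable
    (measurable_pi_apply i).aemeasurable).mp h

lemma integrable_norm_stdGaussian {d : ℕ} :
    Integrable (fun g : EuclideanSpace ℝ (Fin d) => ‖g‖) (stdGaussian d) := by
  rw [_root_.stdGaussian,
    (MeasurableEquiv.measurableEmbedding
      (MeasurableEquiv.toLp 2 (Fin d → ℝ))).integrable_map_iff]
  refine Integrable.mono' (integrable_finset_sum Finset.univ fun i _ => integrable_abs_eval i)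
    ((MeasurableEquiv.measurable _).norm.aestronglyMeasurable) (ae_of_all _ fun x => ?_)
  show ‖‖(MeasurableEquiv.toLp 2 (Fin d → ℝ)) x‖‖ ≤ ∑ i, |x i|
  rw [norm_norm]
  rw [EuclideanSpace.norm_eq]
  have h1 : ∀ i, ‖((MeasurableEquiv.toLp 2 (Fin d → ℝ)) x) i‖ = |x i| := fun i => rfl
  simp_rw [h1]
  calc √(∑ i, |x i| ^ 2) ≤ √((∑ i, |x i|) ^ 2) :=
        Real.sqrt_le_sqrt (Finset.sum_sq_le_sq_sum_of_nonneg fun i _ => abs_nonneg _)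
  _ = ∑ i, |x i| := Real.sqrt_sq (Finset.sum_nonneg fun i _ => abs_nonneg _)

lemma bddAbove_inner {d : ℕ} {K : Set (EuclideanSpace ℝ (Fin d))} {r : ℝ}
    (hK : K ⊆ Metric.closedBall 0 r) (g : EuclideanSpace ℝ (Fin d)) :
    BddAbove (Set.range fun t : K => (inner ℝ g t.1 : ℝ)) := by
  refine ⟨‖g‖ * r, ?_⟩
  rintro y ⟨t, rfl⟩
  calc (inner ℝ g t.1 : ℝ) ≤ ‖g‖ * ‖t.1‖ := real_inner_le_norm g t.1
  _ ≤ ‖g‖ * r := mul_le_mul_of_nonneg_left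
      (by simpa [Metric.mem_closedBall, dist_zero_right] using hK t.2) (norm_nonneg g)

lemma sup_inner_nonneg {d : ℕ} {K : Set (EuclideanSpace ℝ (Fin d))} {r : ℝ}
    (hK : K ⊆ Metric.closedBall 0 r) (h0 : (0 : EuclideanSpace ℝ (Fin d)) ∈ K)
    (g : EuclideanSpace ℝ (Fin d)) :
    0 ≤ ⨆ t : K, (inner ℝ g t.1 : ℝ) := by
  have := le_ciSup (bddAbove_inner hK g) (⟨0, h0⟩ : K)
  simpa using this

lemma sup_inner_le {d : ℕ} {K : Set (EuclideanSpace ℝ (Fin d))} {r : ℝ} (hr : 0 ≤ r)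
    (hK : K ⊆ Metric.closedBall 0 r) (g : EuclideanSpace ℝ (Fin d)) :
    (⨆ t : K, (inner ℝ g t.1 : ℝ)) ≤ r * ‖g‖ := by
  refine Real.iSup_le (fun t => ?_) (mul_nonneg hr (norm_nonneg g))
  calc (inner ℝ g t.1 : ℝ) ≤ ‖g‖ * ‖t.1‖ := real_inner_le_norm g t.1
  _ ≤ ‖g‖ * r := mul_le_mul_of_nonneg_left
      (by simpa [Metric.mem_closedBall, dist_zero_right] using hK t.2) (norm_nonneg g)
  _ = r * ‖g‖ := mul_comm _ _

lemma continuous_sup_inner {d : ℕ} {K : Set (EuclideanSpace ℝ (Fin d))} {r : ℝ}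
    (h0 : (0 : EuclideanSpace ℝ (Fin d)) ∈ K) (hK : K ⊆ Metric.closedBall 0 r) :
    Continuous fun g : EuclideanSpace ℝ (Fin d) => ⨆ t : K, (inner ℝ g t.1 : ℝ) := by
  have hr : 0 ≤ r := by
    simpa [Metric.mem_closedBall, dist_zero_right] using hK h0
  have hne : Nonempty K := ⟨⟨0, h0⟩⟩
  have key : ∀ g g' : EuclideanSpace ℝ (Fin d),
      (⨆ t : K, (inner ℝ g t.1 : ℝ)) ≤ (⨆ t : K, (inner ℝ g' t.1 : ℝ)) + r * ‖g - g'‖ := by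
    intro g g'
    refine ciSup_le fun t => ?_
    have h1 : (inner ℝ g t.1 : ℝ) = (inner ℝ g' t.1 : ℝ) + (inner ℝ (g - g') t.1 : ℝ) := by
      rw [inner_sub_left]; ring
    have h2 : (inner ℝ g' t.1 : ℝ) ≤ ⨆ t : K, (inner ℝ g' t.1 : ℝ) :=
      le_ciSup (bddAbove_inner hK g') t
    have h3 : (inner ℝ (g - g') t.1 : ℝ) ≤ r * ‖g - g'‖ := by
      calc (inner ℝ (g - g') t.1 : ℝ) ≤ ‖g - g'‖ * ‖t.1‖ := real_inner_le_norm _ _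
      _ ≤ ‖g - g'‖ * r := mul_le_mul_of_nonneg_left
          (by simpa [Metric.mem_closedBall, dist_zero_right] using hK t.2) (norm_nonneg _)
      _ = r * ‖g - g'‖ := mul_comm _ _
    linarith
  have : LipschitzWith r.toNNReal (fun g : EuclideanSpace ℝ (Fin d) =>
      ⨆ t : K, (inner ℝ g t.1 : ℝ)) := by
    refine LipschitzWith.of_dist_le_mul fun g g' => ?_
    rw [Real.dist_eq, Real.coe_toNNReal r hr, dist_eq_norm, abs_sub_le_iff]
    constructor
    · linarith [key g g']
    · have h := key g' g
      rw [norm_sub_rev] at h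
      linarith
  exact this.continuous

lemma integrable_sup_inner {d : ℕ} {K : Set (EuclideanSpace ℝ (Fin d))} {r : ℝ} (hr : 0 ≤ r)
    (h0 : (0 : EuclideanSpace ℝ (Fin d)) ∈ K) (hK : K ⊆ Metric.closedBall 0 r) :
    Integrable (fun g : EuclideanSpace ℝ (Fin d) => ⨆ t : K, (inner ℝ g t.1 : ℝ))
      (stdGaussian d) := by
  refine Integrable.mono' (integrable_norm_stdGaussian.const_mul r)
    ((continuous_sup_inner h0 hK).aestronglyMeasurable) (ae_of_all _ fun g => ?_)
  rw [Real.norm_eq_abs, abs_of_nonneg (sup_inner_nonneg hK h0 g)]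
  exact sup_inner_le hr hK g

lemma width_mono {d : ℕ} {T : Set (EuclideanSpace ℝ (Fin d))}
    (h02 : (0 : EuclideanSpace ℝ (Fin d)) ∈ (2:ℝ) • T) {a b : ℝ} (ha : 0 ≤ a) (hab : a ≤ b) :
    gaussWidth (((2:ℝ) • T) ∩ Metric.closedBall 0 a)
      ≤ gaussWidth (((2:ℝ) • T) ∩ Metric.closedBall 0 b) := by
  have hb : 0 ≤ b := ha.trans hab
  have h0a : (0:EuclideanSpace ℝ (Fin d)) ∈ ((2:ℝ) • T) ∩ Metric.closedBall 0 a :=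
    ⟨h02, Metric.mem_closedBall_self ha⟩
  have h0b : (0:EuclideanSpace ℝ (Fin d)) ∈ ((2:ℝ) • T) ∩ Metric.closedBall 0 b :=
    ⟨h02, Metric.mem_closedBall_self hb⟩
  have hKa : ((2:ℝ) • T) ∩ Metric.closedBall 0 a ⊆ Metric.closedBall 0 a := inter_subset_right
  have hKb : ((2:ℝ) • T) ∩ Metric.closedBall 0 b ⊆ Metric.closedBall 0 b := inter_subset_right
  unfold gaussWidth
  refine integral_mono_of_nonneg (ae_of_all _ fun g => sup_inner_nonneg hKa h0a g)
    (integrable_sup_inner hb h0b hKb) (ae_of_all _ fun g => ?_)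
  have : Nonempty (((2:ℝ) • T) ∩ Metric.closedBall 0 a : Set _) := ⟨⟨0, h0a⟩⟩
  refine ciSup_le fun t => ?_
  exact le_ciSup (bddAbove_inner hKb g)
    ⟨t.1, ⟨t.2.1, (Metric.closedBall_subset_closedBall hab) t.2.2⟩⟩

lemma width_ratio {d : ℕ} {T : Set (EuclideanSpace ℝ (Fin d))} (hconv : Convex ℝ T)
    (h02 : (0 : EuclideanSpace ℝ (Fin d)) ∈ (2:ℝ) • T) {a b : ℝ} (ha : 0 < a) (hab : a ≤ b) :
    gaussWidth (((2:ℝ) • T) ∩ Metric.closedBall 0 b)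
      ≤ (b / a) * gaussWidth (((2:ℝ) • T) ∩ Metric.closedBall 0 a) := by
  have hb : 0 < b := ha.trans_le hab
  have h0a : (0:EuclideanSpace ℝ (Fin d)) ∈ ((2:ℝ) • T) ∩ Metric.closedBall 0 a :=
    ⟨h02, Metric.mem_closedBall_self ha.le⟩
  have h0b : (0:EuclideanSpace ℝ (Fin d)) ∈ ((2:ℝ) • T) ∩ Metric.closedBall 0 b :=
    ⟨h02, Metric.mem_closedBall_self hb.le⟩
  have hKa : ((2:ℝ) • T) ∩ Metric.closedBall 0 a ⊆ Metric.closedBall 0 a := inter_subset_right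
  have hKb : ((2:ℝ) • T) ∩ Metric.closedBall 0 b ⊆ Metric.closedBall 0 b := inter_subset_right
  have hpoint : ∀ g : EuclideanSpace ℝ (Fin d),
      (⨆ t : (((2:ℝ) • T) ∩ Metric.closedBall 0 b : Set _), (inner ℝ g t.1 : ℝ))
        ≤ (b / a) * ⨆ t : (((2:ℝ) • T) ∩ Metric.closedBall 0 a : Set _), (inner ℝ g t.1 : ℝ) := by
    intro g
    have : Nonempty (((2:ℝ) • T) ∩ Metric.closedBall 0 b : Set _) := ⟨⟨0, h0b⟩⟩
    refine ciSup_le fun t => ?_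
    have hdnn : (0:ℝ) ≤ a / b := div_nonneg ha.le hb.le
    have hu2 : (a / b) • t.1 ∈ (2:ℝ) • T :=
      (hconv.smul (2:ℝ)).smul_mem_of_zero_mem h02 t.2.1
        ⟨hdnn, div_le_one_of_le₀ hab hb.le⟩
    have htb : ‖t.1‖ ≤ b := by
      simpa [Metric.mem_closedBall, dist_zero_right] using t.2.2
    have hun : (a / b) • t.1 ∈ Metric.closedBall (0 : EuclideanSpace ℝ (Fin d)) a := by
      rw [Metric.mem_closedBall, dist_zero_right, norm_smul]
      calc ‖(a / b : ℝ)‖ * ‖t.1‖ = (a / b) * ‖t.1‖ := by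
            rw [Real.norm_eq_abs, abs_of_nonneg hdnn]
      _ ≤ (a / b) * b := mul_le_mul_of_nonneg_left htb hdnn
      _ = a := div_mul_cancel₀ a hb.ne'
    have hle : (inner ℝ g ((a / b) • t.1) : ℝ)
        ≤ ⨆ t : (((2:ℝ) • T) ∩ Metric.closedBall 0 a : Set _), (inner ℝ g t.1 : ℝ) :=
      le_ciSup (bddAbove_inner hKa g) ⟨_, hu2, hun⟩
    have hinner : (inner ℝ g ((a / b) • t.1) : ℝ) = (a / b) * (inner ℝ g t.1 : ℝ) :=
      real_inner_smul_right g t.1 (a / b)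
    have h2 := mul_le_mul_of_nonneg_left hle (div_nonneg hb.le ha.le)
    rw [hinner] at h2
    calc (inner ℝ g t.1 : ℝ) = (b / a) * ((a / b) * (inner ℝ g t.1 : ℝ)) := by
          field_simp
    _ ≤ _ := h2
  unfold gaussWidth
  rw [← integral_const_mul]
  exact integral_mono_of_nonneg (ae_of_all _ fun g => sup_inner_nonneg hKb h0b g)
    ((integrable_sup_inner ha.le h0a hKa).const_mul _) (ae_of_all _ hpoint)

lemma width_ub {d : ℕ} {T : Set (EuclideanSpace ℝ (Fin d))}
    (h02 : (0 : EuclideanSpace ℝ (Fin d)) ∈ (2:ℝ) • T) {s : ℝ} (hs : 0 ≤ s) :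
    gaussWidth (((2:ℝ) • T) ∩ Metric.closedBall 0 s)
      ≤ s * ∫ g, ‖g‖ ∂(stdGaussian d) := by
  have h0s : (0:EuclideanSpace ℝ (Fin d)) ∈ ((2:ℝ) • T) ∩ Metric.closedBall 0 s :=
    ⟨h02, Metric.mem_closedBall_self hs⟩
  have hKs : ((2:ℝ) • T) ∩ Metric.closedBall 0 s ⊆ Metric.closedBall 0 s := inter_subset_right
  unfold gaussWidth
  rw [← integral_const_mul]
  exact integral_mono_of_nonneg (ae_of_all _ fun g => sup_inner_nonneg hKs h0s g)
    (integrable_norm_stdGaussian.const_mul s) (ae_of_all _ fun g => sup_inner_le hs hKs g)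

/-- **Lemma 3.4** (comparison of the fixed points `s_N*` and `r_k`). -/
theorem fixed_point_comparison {d : ℕ} (T : Set (EuclideanSpace ℝ (Fin d)))
    (N : ℕ) (hN : 1 ≤ N) (Q c₀ η : ℝ) (hQ : 0 < Q) (hc₀ : 0 < c₀) (hη : 0 < η)
    (hconv : Convex ℝ T) (hsym : ∀ t ∈ T, -t ∈ T)
    (hA : {k : ℕ | kStar T Q ≤ k ∧
        rK T Q k ≤ c₀ * Q * Real.sqrt ((k : ℝ) / N)}.Nonempty) :
    (η ≤ 2 / c₀ →
      rK T Q (sInf {k : ℕ | kStar T Q ≤ k ∧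
          rK T Q k ≤ c₀ * Q * Real.sqrt ((k : ℝ) / N)}) / 2 ≤ sStar T N η) ∧
    (1 / c₀ ≤ η →
      kStar T Q < sInf {k : ℕ | kStar T Q ≤ k ∧
          rK T Q k ≤ c₀ * Q * Real.sqrt ((k : ℝ) / N)} →
      sStar T N η ≤ rK T Q (sInf {k : ℕ | kStar T Q ≤ k ∧
          rK T Q k ≤ c₀ * Q * Real.sqrt ((k : ℝ) / N)} - 1)) := by
  classical
  set A := {k : ℕ | kStar T Q ≤ k ∧ rK T Q k ≤ c₀ * Q * Real.sqrt ((k : ℝ) / N)} with hAdef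
  set k₁ := sInf A with hk₁def
  have hk₁A : k₁ ∈ A := Nat.sInf_mem hA
  have hNpos : (0:ℝ) < N := by exact_mod_cast hN
  have hSN : 0 < Real.sqrt (N:ℝ) := Real.sqrt_pos.mpr hNpos
  rcases T.eq_empty_or_nonempty with hT | hne
  · -- degenerate case `T = ∅`
    subst hT
    have hw : ∀ r : ℝ,
        gaussWidth (((2:ℝ) • (∅ : Set (EuclideanSpace ℝ (Fin d)))) ∩ Metric.closedBall 0 r)
          = 0 := by
      intro r
      rw [smul_set_empty, empty_inter]
      unfold gaussWidth
      have h0 : ∀ g : EuclideanSpace ℝ (Fin d),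
          (⨆ t : (∅ : Set (EuclideanSpace ℝ (Fin d))), (inner ℝ g t.1 : ℝ)) = 0 := fun g =>
        Real.iSup_of_isEmpty _
      simp_rw [h0]
      exact integral_zero _ _
    have hrK : ∀ k : ℕ, rK (∅ : Set (EuclideanSpace ℝ (Fin d))) Q k = 0 := by
      intro k
      unfold rK
      have hset : {r : ℝ | 0 < r ∧
          gaussWidth (((2:ℝ) • (∅ : Set (EuclideanSpace ℝ (Fin d))))
            ∩ Metric.closedBall 0 r) ≤ Q * r * Real.sqrt (k:ℝ)} = Ioi 0 := by
        ext r
        simp only [mem_setOf_eq, hw, mem_Ioi]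
        exact ⟨fun h => h.1, fun h => ⟨h, by positivity⟩⟩
      rw [hset]
      exact csInf_Ioi
    constructor
    · intro _
      rw [hrK]
      have h0 : 0 ≤ sStar (∅ : Set (EuclideanSpace ℝ (Fin d))) N η :=
        Real.sInf_nonneg fun s hs => hs.1.le
      linarith
    · intro _ hlt
      exfalso
      have hmem : kStar (∅ : Set (EuclideanSpace ℝ (Fin d))) Q ∈ A := by
        refine ⟨le_rfl, ?_⟩
        rw [hrK]
        positivity
      have := Nat.sInf_le hmem
      omega
  · -- main case : `T` nonempty
    obtain ⟨t₀, ht₀⟩ := hne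
    have h0T : (0 : EuclideanSpace ℝ (Fin d)) ∈ T := by
      have h := hconv ht₀ (hsym t₀ ht₀) (by norm_num : (0:ℝ) ≤ 1/2)
        (by norm_num : (0:ℝ) ≤ 1/2) (by norm_num)
      simpa [smul_neg] using h
    have h02 : (0 : EuclideanSpace ℝ (Fin d)) ∈ (2:ℝ) • T :=
      Set.mem_smul_set.mpr ⟨0, h0T, smul_zero 2⟩
    -- up-set property of the sets defining `rK`
    have hupset : ∀ (k : ℕ) (r₀ r : ℝ), r₀ ≤ r → 0 < r₀ →
        gaussWidth (((2:ℝ) • T) ∩ Metric.closedBall 0 r₀) ≤ Q * r₀ * Real.sqrt (k:ℝ) →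
        gaussWidth (((2:ℝ) • T) ∩ Metric.closedBall 0 r) ≤ Q * r * Real.sqrt (k:ℝ) := by
      intro k r₀ r hle hr₀ hw0
      have h1 := width_ratio hconv h02 hr₀ hle
      have h2 : (r / r₀) * gaussWidth (((2:ℝ) • T) ∩ Metric.closedBall 0 r₀)
          ≤ (r / r₀) * (Q * r₀ * Real.sqrt (k:ℝ)) :=
        mul_le_mul_of_nonneg_left hw0 (div_nonneg (hr₀.trans_le hle).le hr₀.le)
      have h3 : (r / r₀) * (Q * r₀ * Real.sqrt (k:ℝ)) = Q * r * Real.sqrt (k:ℝ) := by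
        field_simp
      linarith
    constructor
    · -- part (a)
      intro hη2
      set M := ∫ g, ‖g‖ ∂(stdGaussian d) with hM
      have hM0 : 0 ≤ M := integral_nonneg fun g => norm_nonneg g
      have hSne : {s : ℝ | 0 < s ∧
          gaussWidth (((2:ℝ) • T) ∩ Metric.closedBall 0 s)
            ≤ η * s ^ 2 * Real.sqrt (N:ℝ)}.Nonempty := by
        have hs₀ : 0 < (M + 1) / (η * Real.sqrt (N:ℝ)) :=
          div_pos (by linarith) (mul_pos hη hSN)
        refine ⟨(M + 1) / (η * Real.sqrt (N:ℝ)), hs₀, ?_⟩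
        have h1 := width_ub (T := T) h02 hs₀.le
        have h2 : η * ((M + 1) / (η * Real.sqrt (N:ℝ))) ^ 2 * Real.sqrt (N:ℝ)
            = ((M + 1) / (η * Real.sqrt (N:ℝ))) * (M + 1) := by
          field_simp
        rw [h2]
        have h3 : ((M + 1) / (η * Real.sqrt (N:ℝ))) * M
            ≤ ((M + 1) / (η * Real.sqrt (N:ℝ))) * (M + 1) :=
          mul_le_mul_of_nonneg_left (by linarith) hs₀.le
        linarith
      show rK T Q k₁ / 2 ≤ sInf {s : ℝ | 0 < s ∧
          gaussWidth (((2:ℝ) • T) ∩ Metric.closedBall 0 s)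
            ≤ η * s ^ 2 * Real.sqrt (N:ℝ)}
      refine le_csInf hSne ?_
      rintro s ⟨hs, hws⟩
      by_contra hcon
      push_neg at hcon
      have hsk : 0 ≤ Real.sqrt (k₁:ℝ) := Real.sqrt_nonneg _
      have hk2 := hk₁A.2
      rw [Real.sqrt_div (by positivity) (N:ℝ)] at hk2
      have h1 : 2 * s * Real.sqrt (N:ℝ) < c₀ * Q * Real.sqrt (k₁:ℝ) := by
        have h2s : 2 * s < c₀ * Q * (Real.sqrt (k₁:ℝ) / Real.sqrt (N:ℝ)) := by linarith
        have h2s' := mul_lt_mul_of_pos_right h2s hSN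
        have heq : c₀ * Q * (Real.sqrt (k₁:ℝ) / Real.sqrt (N:ℝ)) * Real.sqrt (N:ℝ)
            = c₀ * Q * Real.sqrt (k₁:ℝ) := by
          field_simp
        linarith
      have h2 : c₀ * η ≤ 2 := by
        have := (le_div_iff₀ hc₀).mp hη2
        linarith [mul_comm η c₀]
      have hmem : (2 * s) ∈ {r : ℝ | 0 < r ∧
          gaussWidth (((2:ℝ) • T) ∩ Metric.closedBall 0 r) ≤ Q * r * Real.sqrt (k₁:ℝ)} := by
        refine ⟨by linarith, ?_⟩
        have hr1 := width_ratio hconv h02 hs (by linarith : s ≤ 2 * s)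
        have hr2 : (2 * s) / s = 2 := by field_simp
        rw [hr2] at hr1
        have hA1 : η * s * (2 * s * Real.sqrt (N:ℝ)) ≤ η * s * (c₀ * Q * Real.sqrt (k₁:ℝ)) :=
          mul_le_mul_of_nonneg_left h1.le (by positivity)
        have hA2 : (c₀ * η) * (Q * s * Real.sqrt (k₁:ℝ)) ≤ 2 * (Q * s * Real.sqrt (k₁:ℝ)) :=
          mul_le_mul_of_nonneg_right h2 (by positivity)
        nlinarith [hr1, hws]
      have hle : rK T Q k₁ ≤ 2 * s := csInf_le ⟨0, fun x hx => hx.1.le⟩ hmem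
      linarith
    · -- part (b)
      intro hη1 hlt
      set k₂ := k₁ - 1 with hk₂def
      have hkstar1 : 1 ≤ kStar T Q := Nat.succ_le_succ (Nat.zero_le _)
      have hk₂star : kStar T Q ≤ k₂ := by omega
      have hk₂1 : 1 ≤ k₂ := by omega
      have hk₂A : k₂ ∉ A := Nat.notMem_of_lt_sInf (by omega)
      have hk₂r : c₀ * Q * Real.sqrt ((k₂:ℝ) / N) < rK T Q k₂ := by
        by_contra h
        push_neg at h
        exact hk₂A ⟨hk₂star, h⟩
      have hk₂pos : (0:ℝ) < (k₂:ℝ) := by exact_mod_cast hk₂1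
      have hsk₂ : 0 < Real.sqrt (k₂:ℝ) := Real.sqrt_pos.mpr hk₂pos
      have hρpos : 0 < rK T Q k₂ :=
        lt_trans (by positivity : (0:ℝ) < c₀ * Q * Real.sqrt ((k₂:ℝ) / N)) hk₂r
      have hSrne : {r : ℝ | 0 < r ∧
          gaussWidth (((2:ℝ) • T) ∩ Metric.closedBall 0 r)
            ≤ Q * r * Real.sqrt (k₂:ℝ)}.Nonempty := by
        by_contra hem
        rw [not_nonempty_iff_eq_empty] at hem
        have h0 : rK T Q k₂ = 0 := by
          unfold rK
          rw [hem, Real.sInf_empty]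
        rw [h0] at hρpos
        exact lt_irrefl _ hρpos
      have hF3 : gaussWidth (((2:ℝ) • T) ∩ Metric.closedBall 0 (rK T Q k₂))
          ≤ Q * rK T Q k₂ * Real.sqrt (k₂:ℝ) := by
        refine le_of_forall_pos_le_add fun ε hε => ?_
        have hc : 0 < Q * Real.sqrt (k₂:ℝ) := mul_pos hQ hsk₂
        have hde : 0 < ε / (Q * Real.sqrt (k₂:ℝ)) := div_pos hε hc
        have hin : rK T Q k₂ < rK T Q k₂ + ε / (Q * Real.sqrt (k₂:ℝ)) := by linarith
        obtain ⟨r₀, hr₀S, hr₀lt⟩ := exists_lt_of_csInf_lt hSrne hin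
        have hrmem := hupset k₂ r₀ (rK T Q k₂ + ε / (Q * Real.sqrt (k₂:ℝ)))
          hr₀lt.le hr₀S.1 hr₀S.2
        have hmono := width_mono (T := T) h02 hρpos.le
          (by linarith : rK T Q k₂ ≤ rK T Q k₂ + ε / (Q * Real.sqrt (k₂:ℝ)))
        have heq : Q * (rK T Q k₂ + ε / (Q * Real.sqrt (k₂:ℝ))) * Real.sqrt (k₂:ℝ)
            = Q * rK T Q k₂ * Real.sqrt (k₂:ℝ) + ε := by
          field_simp
        linarith
      have h1c : 1 ≤ c₀ * η := by
        have := (div_le_iff₀ hc₀).mp hη1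
        linarith [mul_comm η c₀]
      have h1' : c₀ * Q * Real.sqrt (k₂:ℝ) < rK T Q k₂ * Real.sqrt (N:ℝ) := by
        have hk2 := hk₂r
        rw [Real.sqrt_div (by positivity) (N:ℝ)] at hk2
        have h2s' := mul_lt_mul_of_pos_right hk2 hSN
        have heq : c₀ * Q * (Real.sqrt (k₂:ℝ) / Real.sqrt (N:ℝ)) * Real.sqrt (N:ℝ)
            = c₀ * Q * Real.sqrt (k₂:ℝ) := by
          field_simp
        linarith
      have hmemS : rK T Q k₂ ∈ {s : ℝ | 0 < s ∧
          gaussWidth (((2:ℝ) • T) ∩ Metric.closedBall 0 s)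
            ≤ η * s ^ 2 * Real.sqrt (N:ℝ)} := by
        refine ⟨hρpos, ?_⟩
        have hB1 : η * rK T Q k₂ * (c₀ * Q * Real.sqrt (k₂:ℝ))
            ≤ η * rK T Q k₂ * (rK T Q k₂ * Real.sqrt (N:ℝ)) :=
          mul_le_mul_of_nonneg_left h1'.le (by positivity)
        have hB2 : 1 * (Q * rK T Q k₂ * Real.sqrt (k₂:ℝ))
            ≤ (c₀ * η) * (Q * rK T Q k₂ * Real.sqrt (k₂:ℝ)) :=
          mul_le_mul_of_nonneg_right h1c (by positivity)
        nlinarith [hF3]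
      exact csInf_le ⟨0, fun x hx => hx.1.le⟩ hmemS
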